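/- Let X be a nonnegative real-valued random variable with E[X] < ∞, and for n ≥ 1 define u_n = inf{t ≥ 0 : P(X > t) < 1/n}. Then ∑_{n=1}^∞ u_n / n² < ∞. -/

import Mathlib

open MeasureTheory

/-- If `X` is a nonnegative integrable random variable with quantiles
`u n = inf {t ≥ 0 : P(X > t) < 1/n}`, then `∑_{n=1}^∞ u_n / n² < ∞`. -/
theorem stmt_1 {Ω : Type*} [MeasureSpace Ω] [IsProbabilityMeasure (volume : Measure Ω)]
    (X : Ω → ℝ) (hXnn : ∀ ω, 0 ≤ X ω) (hXint : Integrable X volume)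
    (u : ℕ → ℝ)
    (hu : ∀ n : ℕ, 1 ≤ n →
      u n = sInf {t : ℝ | 0 ≤ t ∧ (volume {ω | t < X ω}).toReal < 1 / (n : ℝ)}) :
    Summable (fun n : ℕ => u n / (n : ℝ) ^ 2) := by
  classical
  set g : ℝ → ℝ := fun t => (volume {ω | t < X ω}).toReal with hgdef
  set E : ℝ := ∫ ω, X ω with hEdef
  set S : ℕ → Set ℝ := fun n => {t : ℝ | 0 ≤ t ∧ g t < 1 / (n : ℝ)} with hSdef
  have hXnn' : 0 ≤ᵐ[volume] X := Filter.Eventually.of_forall hXnn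
  have hE0 : 0 ≤ E := integral_nonneg hXnn
  have hgnn : ∀ t, 0 ≤ g t := fun t => ENNReal.toReal_nonneg
  -- measurability of g
  have hgm : Measurable g := by
    apply Measurable.ennreal_toReal
    exact Antitone.measurable fun s t hst => measure_mono fun ω h => lt_of_le_of_lt hst h
  -- layer cake formula
  have hlayer : E = ∫ t in Set.Ioi (0 : ℝ), g t :=
    hXint.integral_eq_integral_meas_lt hXnn'
  -- g is integrable on (0, ∞)
  have hgint : IntegrableOn g (Set.Ioi (0 : ℝ)) := by
    refine ⟨hgm.aestronglyMeasurable, ?_⟩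
    have key : ∫⁻ t in Set.Ioi (0 : ℝ), volume {ω | t < X ω} < ⊤ := by
      rw [← lintegral_eq_lintegral_meas_lt volume hXnn' hXint.aemeasurable]
      exact hXint.lintegral_lt_top
    refine lt_of_eq_of_lt ?_ key
    refine lintegral_congr fun t => ?_
    rw [Real.enorm_eq_ofReal (hgnn t), hgdef]
    exact ENNReal.ofReal_toReal (measure_ne_top _ _)
  -- the sets S n are nonempty
  have hSne : ∀ n : ℕ, 1 ≤ n → (S n).Nonempty := by
    intro n hn
    have hn0 : (0 : ℝ) < n := by exact_mod_cast hn
    set t0 : ℝ := n * (E + 1) with ht0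
    have ht0pos : 0 < t0 := by positivity
    have hmarkov : t0 * (volume {ω | t0 ≤ X ω}).toReal ≤ E :=
      mul_meas_ge_le_integral_of_nonneg hXnn' hXint t0
    have hsub : g t0 ≤ (volume {ω | t0 ≤ X ω}).toReal := by
      apply ENNReal.toReal_mono (measure_ne_top _ _)
      exact measure_mono fun ω (h : t0 < X ω) => le_of_lt h
    refine ⟨t0, ht0pos.le, ?_⟩
    have h1 : t0 * g t0 ≤ E :=
      le_trans (mul_le_mul_of_nonneg_left hsub ht0pos.le) hmarkov
    rw [lt_div_iff₀ hn0]
    have hg0 := hgnn t0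
    nlinarith [h1]
  have hSbdd : ∀ n : ℕ, BddBelow (S n) := fun n => ⟨0, fun t ht => ht.1⟩
  have hueq : ∀ n : ℕ, 1 ≤ n → u n = sInf (S n) := fun n hn => hu n hn
  have hunn : ∀ n : ℕ, 1 ≤ n → 0 ≤ u n := by
    intro n hn
    rw [hueq n hn]
    exact le_csInf (hSne n hn) fun t ht => ht.1
  have humono : ∀ k m : ℕ, 1 ≤ k → k ≤ m → u k ≤ u m := by
    intro k m hk hkm
    have hm : 1 ≤ m := le_trans hk hkm
    rw [hueq k hk, hueq m hm]
    refine csInf_le_csInf (hSbdd k) (hSne m hm) fun t ht => ⟨ht.1, lt_of_lt_of_le ht.2 ?_⟩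
    have hk0 : (0 : ℝ) < k := by exact_mod_cast hk
    have : (k : ℝ) ≤ m := by exact_mod_cast hkm
    exact one_div_le_one_div_of_le hk0 this
  -- lower bound on g below the quantile
  have hlb : ∀ n : ℕ, 1 ≤ n → ∀ t : ℝ, 0 ≤ t → t < u n → 1 / (n : ℝ) ≤ g t := by
    intro n hn t ht htn
    by_contra h
    push_neg at h
    have : u n ≤ t := by
      rw [hueq n hn]; exact csInf_le (hSbdd n) ⟨ht, h⟩
    linarith
  -- the modified sequence
  set U : ℕ → ℝ := fun k => if k = 0 then 0 else u k with hUdef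
  have hUnn : ∀ k, 0 ≤ U k := by
    intro k
    rcases Nat.eq_zero_or_pos k with h | h
    · simp [hUdef, h]
    · simpa [hUdef, Nat.pos_iff_ne_zero.mp h] using hunn k h
  have hUstep : ∀ k, U k ≤ U (k + 1) := by
    intro k
    rcases Nat.eq_zero_or_pos k with h | h
    · subst h
      simpa [hUdef] using hunn 1 le_rfl
    · have := humono k (k + 1) h (Nat.le_succ k)
      simpa [hUdef, Nat.pos_iff_ne_zero.mp h] using this
  -- integrability on the intervals
  have hintOn : ∀ a b : ℝ, 0 ≤ a → IntegrableOn g (Set.Ioc a b) :=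
    fun a b ha => hgint.mono_set fun t ht => lt_of_le_of_lt ha ht.1
  -- key per-step integral bound
  have hkey : ∀ k : ℕ, (U (k + 1) - U k) / ((k : ℝ) + 1) ≤
      ∫ t in Set.Ioc (U k) (U (k + 1)), g t := by
    intro k
    have hab : U k ≤ U (k + 1) := hUstep k
    have ha0 : 0 ≤ U k := hUnn k
    have hEq : ∫ t in Set.Ioc (U k) (U (k + 1)), g t
        = ∫ t in Set.Ioo (U k) (U (k + 1)), g t := integral_Ioc_eq_integral_Ioo
    rw [hEq]
    have hmeas : (volume (Set.Ioo (U k) (U (k + 1)))).toReal = U (k + 1) - U k := by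
      rw [Real.volume_Ioo, ENNReal.toReal_ofReal (by linarith)]
    have hk1 : (1 : ℕ) ≤ k + 1 := Nat.le_add_left 1 k
    have hlow : ∀ t ∈ Set.Ioo (U k) (U (k + 1)), 1 / ((k : ℝ) + 1) ≤ g t := by
      intro t ht
      have ht0 : 0 ≤ t := le_of_lt (lt_of_le_of_lt ha0 ht.1)
      have htu : t < u (k + 1) := by
        have : U (k + 1) = u (k + 1) := by simp [hUdef]
        rw [← this]; exact ht.2
      have := hlb (k + 1) hk1 t ht0 htu
      push_cast at this
      exact this
    have := setIntegral_ge_of_const_le_real measurableSet_Ioo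
      (by rw [Real.volume_Ioo]; exact ENNReal.ofReal_ne_top)
      hlow ((hintOn (U k) (U (k + 1)) ha0).mono_set Set.Ioo_subset_Ioc_self)
    rw [measureReal_def, hmeas] at this
    calc (U (k + 1) - U k) / ((k : ℝ) + 1)
        = 1 / ((k : ℝ) + 1) * (U (k + 1) - U k) := by ring
      _ ≤ _ := this
  -- partial sums of increments weighted by 1/(k+1) are bounded by E
  have hsumstep : ∀ N : ℕ, ∑ k ∈ Finset.range N, (U (k + 1) - U k) / ((k : ℝ) + 1) ≤ E := by
    intro N
    have hii : ∀ k < N, IntervalIntegrable g volume (U k) (U (k + 1)) := by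
      intro k _
      rw [intervalIntegrable_iff, Set.uIoc_of_le (hUstep k)]
      exact hintOn _ _ (hUnn k)
    have hsum1 : ∑ k ∈ Finset.range N, ∫ t in Set.Ioc (U k) (U (k + 1)), g t
        = ∫ t in Set.Ioc (U 0) (U N), g t := by
      have := intervalIntegral.sum_integral_adjacent_intervals (f := g) (μ := volume)
        (a := U) hii
      have hU0N : U 0 ≤ U N :=
        monotone_nat_of_le_succ hUstep (Nat.zero_le N)
      calc ∑ k ∈ Finset.range N, ∫ t in Set.Ioc (U k) (U (k + 1)), g t
          = ∑ k ∈ Finset.range N, ∫ t in (U k)..(U (k + 1)), g t := by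
            refine Finset.sum_congr rfl fun k _ => ?_
            rw [intervalIntegral.integral_of_le (hUstep k)]
        _ = ∫ t in (U 0)..(U N), g t := this
        _ = ∫ t in Set.Ioc (U 0) (U N), g t := intervalIntegral.integral_of_le hU0N
    calc ∑ k ∈ Finset.range N, (U (k + 1) - U k) / ((k : ℝ) + 1)
        ≤ ∑ k ∈ Finset.range N, ∫ t in Set.Ioc (U k) (U (k + 1)), g t :=
          Finset.sum_le_sum fun k _ => hkey k
      _ = ∫ t in Set.Ioc (U 0) (U N), g t := hsum1
      _ ≤ ∫ t in Set.Ioi (0 : ℝ), g t := by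
          refine setIntegral_mono_set hgint
            (Filter.Eventually.of_forall fun t => hgnn t) ?_
          have : Set.Ioc (U 0) (U N) ⊆ Set.Ioi (0 : ℝ) := by
            rw [show U 0 = 0 by simp [hUdef]]
            exact fun t ht => ht.1
          exact Filter.Eventually.of_forall this
      _ = E := hlayer.symm
  -- now the main partial sum bound
  have hnonneg : ∀ n : ℕ, 0 ≤ u n / (n : ℝ) ^ 2 := by
    intro n
    rcases Nat.eq_zero_or_pos n with h | h
    · simp [h]
    · exact div_nonneg (hunn n h) (sq_nonneg _)
  apply summable_of_sum_range_le (c := 2 * E) hnonneg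
  intro N
  set c : ℕ → ℝ := fun k => U (k + 1) - U k with hcdef
  have hcnn : ∀ k, 0 ≤ c k := fun k => sub_nonneg.mpr (hUstep k)
  have step1 : ∀ n ∈ Finset.range N, u n / (n : ℝ) ^ 2
      = ∑ k ∈ Finset.range N, (if k < n then c k / (n : ℝ) ^ 2 else 0) := by
    intro n hn
    have hUn : U n = ∑ k ∈ Finset.range n, c k := by
      have := Finset.sum_range_sub U n
      rw [this]
      simp [hUdef]
    have h1 : u n / (n : ℝ) ^ 2 = U n / (n : ℝ) ^ 2 := by
      rcases Nat.eq_zero_or_pos n with h | h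
      · simp [h, hUdef]
      · simp [hUdef, Nat.pos_iff_ne_zero.mp h]
    rw [h1, hUn, Finset.sum_div]
    rw [← Finset.sum_filter]
    refine (Finset.sum_congr ?_ fun k _ => rfl).symm
    ext k
    simp only [Finset.mem_filter, Finset.mem_range]
    exact ⟨fun h => h.2, fun h => ⟨lt_trans h (Finset.mem_range.mp hn), h⟩⟩
  have step2 : ∀ k : ℕ, ∑ n ∈ Finset.range N, (if k < n then c k / (n : ℝ) ^ 2 else 0)
      ≤ c k * (2 / ((k : ℝ) + 1)) := by
    intro k
    have hfe : (Finset.range N).filter (fun n => k < n) = Finset.Ioo k N := by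
      ext n
      simp only [Finset.mem_filter, Finset.mem_range, Finset.mem_Ioo]
      tauto
    rw [← Finset.sum_filter, hfe]
    have : ∑ n ∈ Finset.Ioo k N, c k / (n : ℝ) ^ 2
        = c k * ∑ n ∈ Finset.Ioo k N, ((n : ℝ) ^ 2)⁻¹ := by
      rw [Finset.mul_sum]
      exact Finset.sum_congr rfl fun n _ => div_eq_mul_inv _ _
    rw [this]
    exact mul_le_mul_of_nonneg_left (sum_Ioo_inv_sq_le k N) (hcnn k)
  calc ∑ n ∈ Finset.range N, u n / (n : ℝ) ^ 2
      = ∑ n ∈ Finset.range N, ∑ k ∈ Finset.range N,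
          (if k < n then c k / (n : ℝ) ^ 2 else 0) := Finset.sum_congr rfl step1
    _ = ∑ k ∈ Finset.range N, ∑ n ∈ Finset.range N,
          (if k < n then c k / (n : ℝ) ^ 2 else 0) := Finset.sum_comm
    _ ≤ ∑ k ∈ Finset.range N, c k * (2 / ((k : ℝ) + 1)) :=
        Finset.sum_le_sum fun k _ => step2 k
    _ = 2 * ∑ k ∈ Finset.range N, c k / ((k : ℝ) + 1) := by
        rw [Finset.mul_sum]
        exact Finset.sum_congr rfl fun k _ => by ring
    _ ≤ 2 * E := by
        have := hsumstep N
        linarith
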